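/- For every k ≥ 1 and every x ∈ ℝ^k, let x̃ = x − ((Σ_i x_i − 1)/k)·𝟙 be the orthogonal projection of x onto the affine hyperplane {z ∈ ℝ^k : Σ_i z_i = 1}. Then Π(x) = Π(x̃); in particular, if x̃ ∈ Δ_k then Π(x) = x̃. -/

import Mathlib

open scoped BigOperators RealInnerProductSpace

/-- The probability simplex in `ℝ^k`. -/
def simplex (k : ℕ) : Set (EuclideanSpace ℝ (Fin k)) :=
  {p | (∀ i, 0 ≤ p i) ∧ ∑ i, p i = 1}

/-- `q` is the Euclidean (L2) metric projection of `x` onto the probability simplex. -/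
def IsL2ProjOnSimplex (k : ℕ) (x q : EuclideanSpace ℝ (Fin k)) : Prop :=
  q ∈ simplex k ∧ ∀ r ∈ simplex k, ‖q - x‖ ≤ ‖r - x‖

/-- The all-ones vector in `ℝ^k`. -/
noncomputable def onesVec (k : ℕ) : EuclideanSpace ℝ (Fin k) :=
  (WithLp.equiv 2 (Fin k → ℝ)).symm fun _ => 1

lemma onesVec_apply (k : ℕ) (i : Fin k) : onesVec k i = 1 := rfl

lemma key_sq (k : ℕ) (hk : 1 ≤ k) (x xt : EuclideanSpace ℝ (Fin k))
    (hxt : xt = x - (((∑ i, x i) - 1) / (k : ℝ)) • onesVec k)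
    (p : EuclideanSpace ℝ (Fin k)) (hp : ∑ i, p i = 1) :
    ‖p - x‖ ^ 2 = ‖p - xt‖ ^ 2 + (((∑ i, x i) - 1) / (k : ℝ)) ^ 2 * k := by
  have hk0 : (k : ℝ) ≠ 0 := by
    have : (0:ℝ) < k := by exact_mod_cast Nat.lt_of_lt_of_le Nat.zero_lt_one hk
    exact ne_of_gt this
  set t : ℝ := ((∑ i, x i) - 1) / (k : ℝ) with ht
  have hdiff : p - x = (p - xt) - t • onesVec k := by
    rw [hxt]; abel
  have hsum_xt : ∑ i, xt i = 1 := by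
    rw [hxt]
    have : ∀ i, (x - t • onesVec k) i = x i - t := by
      intro i
      simp [onesVec_apply]
    simp only [this, Finset.sum_sub_distrib, Finset.sum_const, Finset.card_univ,
      Fintype.card_fin, nsmul_eq_mul]
    rw [ht, mul_div_assoc', mul_div_cancel_left₀ _ hk0]; ring
  have hinner : (inner ℝ (p - xt) (t • onesVec k) : ℝ) = 0 := by
    rw [real_inner_smul_right]
    have : (inner ℝ (p - xt) (onesVec k) : ℝ) = ∑ i, (p i - xt i) := by
      rw [PiLp.inner_apply]
      apply Finset.sum_congr rfl
      intro i _
      simp [onesVec_apply, PiLp.sub_apply]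
    rw [this, Finset.sum_sub_distrib, hp, hsum_xt]
    ring
  have hones : ‖(t • onesVec k : EuclideanSpace ℝ (Fin k))‖ ^ 2 = t ^ 2 * k := by
    rw [← real_inner_self_eq_norm_sq, real_inner_smul_left, real_inner_smul_right,
      PiLp.inner_apply]
    simp [onesVec_apply]
    ring
  calc ‖p - x‖ ^ 2 = ‖(p - xt) - t • onesVec k‖ ^ 2 := by rw [hdiff]
    _ = ‖p - xt‖ ^ 2 - 2 * (inner ℝ (p - xt) (t • onesVec k) : ℝ)
        + ‖(t • onesVec k : EuclideanSpace ℝ (Fin k))‖ ^ 2 := by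
        rw [@norm_sub_sq_real]
    _ = ‖p - xt‖ ^ 2 + t ^ 2 * k := by rw [hinner, hones]; ring

lemma key_iff (k : ℕ) (hk : 1 ≤ k) (x xt : EuclideanSpace ℝ (Fin k))
    (hxt : xt = x - (((∑ i, x i) - 1) / (k : ℝ)) • onesVec k)
    (p r : EuclideanSpace ℝ (Fin k)) (hp : ∑ i, p i = 1) (hr : ∑ i, r i = 1) :
    ‖p - x‖ ≤ ‖r - x‖ ↔ ‖p - xt‖ ≤ ‖r - xt‖ := by
  have h1 := key_sq k hk x xt hxt p hp
  have h2 := key_sq k hk x xt hxt r hr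
  constructor
  · intro h
    have := pow_le_pow_left₀ (norm_nonneg _) h 2
    rw [h1, h2] at this
    have h3 : ‖p - xt‖ ^ 2 ≤ ‖r - xt‖ ^ 2 := by linarith
    exact (pow_le_pow_iff_left₀ (norm_nonneg _) (norm_nonneg _) (by norm_num)).mp h3
  · intro h
    have := pow_le_pow_left₀ (norm_nonneg _) h 2
    have h3 : ‖p - x‖ ^ 2 ≤ ‖r - x‖ ^ 2 := by rw [h1, h2]; linarith
    exact (pow_le_pow_iff_left₀ (norm_nonneg _) (norm_nonneg _) (by norm_num)).mp h3

/-- for every `x ∈ ℝ^k`, letting `x̃ = x − ((∑ i, x i − 1)/k) • 𝟙` be the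
orthogonal projection of `x` onto the hyperplane `{z : ∑ i z i = 1}`, the projections onto
the simplex of `x` and of `x̃` coincide; in particular, if `x̃ ∈ Δ_k` then `Π(x) = x̃`. -/
theorem stmt_17 (k : ℕ) (hk : 1 ≤ k) (x : EuclideanSpace ℝ (Fin k))
    (xt : EuclideanSpace ℝ (Fin k))
    (hxt : xt = x - (((∑ i, x i) - 1) / (k : ℝ)) • onesVec k) :
    (∀ q, IsL2ProjOnSimplex k x q ↔ IsL2ProjOnSimplex k xt q) ∧
      (xt ∈ simplex k → IsL2ProjOnSimplex k x xt) := by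
  have main : ∀ q, IsL2ProjOnSimplex k x q ↔ IsL2ProjOnSimplex k xt q := by
    intro q
    constructor
    · rintro ⟨hq, hmin⟩
      exact ⟨hq, fun r hr => (key_iff k hk x xt hxt q r hq.2 hr.2).mp (hmin r hr)⟩
    · rintro ⟨hq, hmin⟩
      exact ⟨hq, fun r hr => (key_iff k hk x xt hxt q r hq.2 hr.2).mpr (hmin r hr)⟩
  refine ⟨main, fun hmem => (main xt).mpr ?_⟩
  exact ⟨hmem, fun r hr => by simp⟩
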